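/- If f ≻ g under continuous majorization (with f, g probability densities on the same domain), then the Shannon differential entropy satisfies h(f) ≤ h(g), where h(f) = −∫ f(r) ln f(r) dr, assuming both entropies exist. -/

import Mathlib

open MeasureTheory Set Real
open scoped ENNReal

noncomputable def qAux (x : ℝ) : ℝ := if x ≤ 1 then x - x * Real.log x else 1
noncomputable def pAux (x : ℝ) : ℝ := if 1 ≤ x then x * Real.log x - x + 1 else 0

lemma measurable_qAux : Measurable qAux := by
  unfold qAux
  exact Measurable.ite (measurableSet_le measurable_id measurable_const)
    (measurable_id.sub (measurable_id.mul Real.measurable_log)) measurable_const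

lemma measurable_pAux : Measurable pAux := by
  unfold pAux
  exact Measurable.ite (measurableSet_le measurable_const measurable_id)
    (((measurable_id.mul Real.measurable_log).sub measurable_id).add measurable_const)
    measurable_const

lemma qAux_nonneg {x : ℝ} (hx : 0 ≤ x) : 0 ≤ qAux x := by
  unfold qAux; split_ifs with h
  · nlinarith [Real.log_nonpos hx h, mul_nonpos_of_nonneg_of_nonpos hx (Real.log_nonpos hx h)]
  · norm_num

lemma qAux_le {x : ℝ} (hx : 0 ≤ x) : qAux x ≤ x + |x * Real.log x| := by
  unfold qAux; split_ifs with h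
  · nlinarith [neg_abs_le (x * Real.log x)]
  · push_neg at h
    nlinarith [abs_nonneg (x * Real.log x)]

lemma pAux_nonneg {x : ℝ} (hx : 0 ≤ x) : 0 ≤ pAux x := by
  unfold pAux; split_ifs with h
  · have hx0 : 0 < x := lt_of_lt_of_le one_pos h
    have h1 : Real.log x⁻¹ ≤ x⁻¹ - 1 := Real.log_le_sub_one_of_pos (by positivity)
    rw [Real.log_inv] at h1
    have h2 : x * x⁻¹ = 1 := mul_inv_cancel₀ hx0.ne'
    nlinarith [mul_le_mul_of_nonneg_left h1 hx0.le]
  · exact le_refl 0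

lemma pAux_le {x : ℝ} (hx : 0 ≤ x) : pAux x ≤ |x * Real.log x| := by
  unfold pAux; split_ifs with h
  · have hl : 0 ≤ x * Real.log x := mul_nonneg hx (Real.log_nonneg h)
    rw [abs_of_nonneg hl]; linarith
  · exact abs_nonneg _

lemma xlogx_decomp {x : ℝ} (hx : 0 ≤ x) : x * Real.log x = x - qAux x + pAux x := by
  unfold qAux pAux; split_ifs with h1 h2 h3
  · have hx1 : x = 1 := le_antisymm h1 h2
    subst hx1; simp
  · ring
  · ring
  · push_neg at h1 h3; linarith

lemma intQ {x : ℝ} (hx : 0 ≤ x) :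
    IntegrableOn (fun t => min x t / t) (Ioc (0:ℝ) 1) := by
  apply Measure.integrableOn_of_bounded (M := 1)
  · simp [Real.volume_Ioc]
  · exact ((measurable_const.min measurable_id).div measurable_id).aestronglyMeasurable
  · filter_upwards [ae_restrict_mem measurableSet_Ioc] with t ht
    have ht0 : 0 < t := ht.1
    have hnn : 0 ≤ min x t / t := div_nonneg (le_min hx ht0.le) ht0.le
    rw [Real.norm_eq_abs, abs_of_nonneg hnn]
    rw [div_le_one ht0]
    exact min_le_right _ _

lemma calcQ {x : ℝ} (hx : 0 ≤ x) :
    ∫ t in Ioc (0:ℝ) 1, min x t / t = qAux x := by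
  unfold qAux
  rcases le_or_gt x 1 with h1 | h1
  · rw [if_pos h1]
    rcases eq_or_lt_of_le hx with h0 | h0
    · have : ∫ t in Ioc (0:ℝ) 1, min x t / t = ∫ t in Ioc (0:ℝ) 1, (0:ℝ) := by
        refine setIntegral_congr_fun measurableSet_Ioc fun t ht => ?_
        rw [min_eq_left (by linarith [ht.1] : x ≤ t)]
        rw [← h0]; simp
      rw [this, integral_zero, ← h0]; simp
    · have hsub1 : Ioc (0:ℝ) x ⊆ Ioc 0 1 := Ioc_subset_Ioc_right h1
      have hsub2 : Ioc x 1 ⊆ Ioc (0:ℝ) 1 := Ioc_subset_Ioc_left hx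
      have hsplit : Ioc (0:ℝ) x ∪ Ioc x 1 = Ioc 0 1 := Ioc_union_Ioc_eq_Ioc hx h1
      have e1 : ∫ t in Ioc (0:ℝ) x, min x t / t = x := by
        have : ∫ t in Ioc (0:ℝ) x, min x t / t = ∫ t in Ioc (0:ℝ) x, (1:ℝ) := by
          refine setIntegral_congr_fun measurableSet_Ioc fun t ht => ?_
          rw [min_eq_right ht.2, div_self (ne_of_gt ht.1)]
        rw [this]; simp [Real.volume_Ioc, hx]
      have e2 : ∫ t in Ioc x 1, min x t / t = -(x * Real.log x) := by
        have : ∫ t in Ioc x 1, min x t / t = ∫ t in Ioc x 1, x * (1 / t) := by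
          refine setIntegral_congr_fun measurableSet_Ioc fun t ht => ?_
          rw [min_eq_left ht.1.le]; ring
        rw [this, ← intervalIntegral.integral_of_le h1,
          intervalIntegral.integral_const_mul, integral_one_div ?h0]
        · rw [Real.log_div one_ne_zero (ne_of_gt h0), Real.log_one]; ring
        case h0 =>
          rw [Set.uIcc_of_le h1]
          rintro ⟨ha, -⟩; linarith
      rw [← hsplit, setIntegral_union (Ioc_disjoint_Ioc_of_le le_rfl) measurableSet_Ioc
        ((intQ hx).mono_set hsub1) ((intQ hx).mono_set hsub2), e1, e2]
      ring
  · rw [if_neg (not_le.mpr h1)]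
    have : ∫ t in Ioc (0:ℝ) 1, min x t / t = ∫ t in Ioc (0:ℝ) 1, (1:ℝ) := by
      refine setIntegral_congr_fun measurableSet_Ioc fun t ht => ?_
      rw [min_eq_right (ht.2.trans h1.le), div_self (ne_of_gt ht.1)]
    rw [this]; simp [Real.volume_Ioc]

lemma intP {x : ℝ} (hx : 0 ≤ x) :
    IntegrableOn (fun t => max (x - t) 0 / t) (Ioi (1:ℝ)) := by
  have hbound : Integrable ((Ioc (1:ℝ) x).indicator fun _ => x) := by
    rw [integrable_indicator_iff measurableSet_Ioc]
    exact integrableOn_const measure_Ioc_lt_top.ne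
  apply Integrable.mono' (hbound.restrict (s := Ioi 1))
  · exact (((measurable_const.sub measurable_id).max measurable_const).div
      measurable_id).aestronglyMeasurable
  · filter_upwards [ae_restrict_mem measurableSet_Ioi] with t ht
    have ht0 : (0:ℝ) < t := lt_trans one_pos ht
    have hnn : 0 ≤ max (x - t) 0 / t := div_nonneg (le_max_right _ _) ht0.le
    rw [Real.norm_eq_abs, abs_of_nonneg hnn]
    simp only [mem_Ioi] at ht
    rcases le_or_gt t x with h | h
    · rw [Set.indicator_of_mem (Set.mem_Ioc.mpr ⟨ht, h⟩)]
      rw [max_eq_left (by linarith)]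
      have h2 : (x - t) / t ≤ x - t := div_le_self (by linarith) ht.le
      linarith
    · rw [max_eq_right (by linarith)]
      simp only [zero_div]
      exact Set.indicator_apply_nonneg fun _ => hx

lemma calcP {x : ℝ} (hx : 0 ≤ x) :
    ∫ t in Ioi (1:ℝ), max (x - t) 0 / t = pAux x := by
  unfold pAux
  rcases le_or_gt x 1 with h1 | h1
  · have hz : ∫ t in Ioi (1:ℝ), max (x - t) 0 / t = 0 := by
      have : ∫ t in Ioi (1:ℝ), max (x - t) 0 / t = ∫ t in Ioi (1:ℝ), (0:ℝ) := by
        refine setIntegral_congr_fun measurableSet_Ioi fun t ht => ?_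
        rw [max_eq_right (by simp only [mem_Ioi] at ht; linarith)]; simp
      rw [this, integral_zero]
    split_ifs with h
    · have hx1 : x = 1 := le_antisymm h1 h
      subst hx1; rw [hz]; simp
    · exact hz
  · rw [if_pos h1.le]
    have hsub1 : Ioc (1:ℝ) x ⊆ Ioi 1 := Ioc_subset_Ioi_self
    have hsub2 : Ioi x ⊆ Ioi (1:ℝ) := Ioi_subset_Ioi h1.le
    have hsplit : Ioc (1:ℝ) x ∪ Ioi x = Ioi 1 := Ioc_union_Ioi_eq_Ioi h1.le
    have e2 : ∫ t in Ioi x, max (x - t) 0 / t = 0 := by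
      have : ∫ t in Ioi x, max (x - t) 0 / t = ∫ t in Ioi x, (0:ℝ) := by
        refine setIntegral_congr_fun measurableSet_Ioi fun t ht => ?_
        rw [max_eq_right (by simp only [mem_Ioi] at ht; linarith)]; simp
      rw [this, integral_zero]
    have e1 : ∫ t in Ioc (1:ℝ) x, max (x - t) 0 / t = x * Real.log x - x + 1 := by
      have hco : ∫ t in Ioc (1:ℝ) x, max (x - t) 0 / t
          = ∫ t in Ioc (1:ℝ) x, (x * (1 / t) - 1) := by
        refine setIntegral_congr_fun measurableSet_Ioc fun t ht => ?_
        have ht0 : (0:ℝ) < t := lt_trans one_pos ht.1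
        rw [max_eq_left (by linarith [ht.2])]
        field_simp
      have hi1 : IntervalIntegrable (fun t => x * (1 / t)) volume 1 x := by
        apply ContinuousOn.intervalIntegrable
        apply continuousOn_const.mul
        apply ContinuousOn.div continuousOn_const continuousOn_id
        intro t ht
        rw [Set.uIcc_of_le h1.le] at ht
        exact ne_of_gt (lt_of_lt_of_le one_pos ht.1)
      rw [hco, ← intervalIntegral.integral_of_le h1.le,
        intervalIntegral.integral_sub hi1 intervalIntegrable_const,
        intervalIntegral.integral_const_mul, integral_one_div ?h0,
        intervalIntegral.integral_const]
      · rw [div_one]; simp; ring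
      case h0 =>
        rw [Set.uIcc_of_le h1.le]
        rintro ⟨ha, -⟩; linarith
    rw [← hsplit, setIntegral_union (Ioc_disjoint_Ioi le_rfl) measurableSet_Ioi
      ((intP hx).mono_set hsub1) ((intP hx).mono_set hsub2), e1, e2]
    ring


lemma qAux_zero : qAux 0 = 0 := by unfold qAux; norm_num

lemma pAux_zero : pAux 0 = 0 := by unfold pAux; norm_num

lemma exists_sigmaFinite {A : Type*} [MeasurableSpace A] {μ : Measure A} {F : A → ℝ}
    (hFm : Measurable F) (hF0 : ∀ r, 0 ≤ F r) (hFint : Integrable F μ) :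
    ∃ t : Set A, MeasurableSet t ∧ (∀ r ∈ tᶜ, F r = 0) ∧ SigmaFinite (μ.restrict t) := by
  set s : ℕ → Set A := fun n => {r | 1 / (n + 1 : ℝ) ≤ F r} with hs
  have hsm : ∀ n, MeasurableSet (s n) := fun n => measurableSet_le measurable_const hFm
  have hfin : ∀ n, μ (s n) < ∞ := fun n =>
    hFint.measure_ge_lt_top (by positivity : (0:ℝ) < 1 / (n + 1 : ℝ))
  refine ⟨⋃ n, s n, MeasurableSet.iUnion hsm, ?_, ?_⟩
  · intro r hr
    simp only [mem_compl_iff, mem_iUnion, not_exists, hs, mem_setOf_eq, not_le] at hr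
    by_contra h0
    have hpos : 0 < F r := lt_of_le_of_ne (hF0 r) (Ne.symm h0)
    obtain ⟨n, hn⟩ := exists_nat_one_div_lt hpos
    exact absurd (hr n) (not_lt.mpr (le_of_lt hn)).elim
  · refine ⟨⟨⟨fun n => s n ∪ (⋃ m, s m)ᶜ, fun _ => trivial, fun n => ?_, ?_⟩⟩⟩
    · rw [Measure.restrict_apply ((hsm n).union (MeasurableSet.iUnion hsm).compl)]
      refine lt_of_le_of_lt (measure_mono ?_) (hfin n)
      rintro r ⟨hr1, hr2⟩
      rcases hr1 with h | h
      · exact h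
      · exact absurd hr2 h
    · refine eq_univ_of_forall fun r => ?_
      by_cases h : r ∈ ⋃ m, s m
      · obtain ⟨_, ⟨n, rfl⟩, hn⟩ := h
        exact mem_iUnion.mpr ⟨n, Or.inl hn⟩
      · exact mem_iUnion.mpr ⟨0, Or.inr h⟩

lemma lintegral_restrict_eq {A : Type*} [MeasurableSpace A] {μ : Measure A} {s : Set A}
    (hs : MeasurableSet s) {h : A → ℝ≥0∞} (h0 : ∀ r ∈ sᶜ, h r = 0) :
    ∫⁻ r, h r ∂(μ.restrict s) = ∫⁻ r, h r ∂μ := by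
  rw [← lintegral_indicator hs]
  refine lintegral_congr fun r => ?_
  by_cases hr : r ∈ s
  · rw [Set.indicator_of_mem hr]
  · rw [Set.indicator_of_notMem hr, h0 r hr]

lemma keyQ_sf {A : Type*} [MeasurableSpace A] (μ : Measure A) [SigmaFinite μ] {F : A → ℝ}
    (hFm : Measurable F) (hF0 : ∀ r, 0 ≤ F r) :
    ∫⁻ t in Ioc (0:ℝ) 1, (∫⁻ r, ENNReal.ofReal (min (F r) t) ∂μ) / ENNReal.ofReal t
      = ∫⁻ r, ENNReal.ofReal (qAux (F r)) ∂μ := by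
  have hmeas : Measurable (Function.uncurry fun (t : ℝ) (r : A) =>
      ENNReal.ofReal (min (F r) t) / ENNReal.ofReal t) := by
    apply Measurable.div
    · exact ENNReal.measurable_ofReal.comp ((hFm.comp measurable_snd).min measurable_fst)
    · exact ENNReal.measurable_ofReal.comp measurable_fst
  calc ∫⁻ t in Ioc (0:ℝ) 1, (∫⁻ r, ENNReal.ofReal (min (F r) t) ∂μ) / ENNReal.ofReal t
      = ∫⁻ t in Ioc (0:ℝ) 1, ∫⁻ r, ENNReal.ofReal (min (F r) t) / ENNReal.ofReal t ∂μ := by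
        refine lintegral_congr fun t => ?_
        simp only [div_eq_mul_inv]
        rw [lintegral_mul_const'' _ ((hFm.min measurable_const).ennreal_ofReal).aemeasurable]
    _ = ∫⁻ r, (∫⁻ t in Ioc (0:ℝ) 1, ENNReal.ofReal (min (F r) t) / ENNReal.ofReal t) ∂μ := by
        exact lintegral_lintegral_swap (μ := volume.restrict (Ioc (0:ℝ) 1)) (ν := μ) hmeas.aemeasurable
    _ = ∫⁻ r, ENNReal.ofReal (qAux (F r)) ∂μ := by
        refine lintegral_congr fun r => ?_
        rw [setLIntegral_congr_fun measurableSet_Ioc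
          ((fun t (ht : t ∈ Ioc (0:ℝ) 1) =>
            (ENNReal.ofReal_div_of_pos ht.1).symm))]
        rw [← ofReal_integral_eq_lintegral_ofReal (intQ (hF0 r)) ?nn, calcQ (hF0 r)]
        case nn =>
          filter_upwards [ae_restrict_mem measurableSet_Ioc] with t ht
          exact div_nonneg (le_min (hF0 r) ht.1.le) ht.1.le

lemma keyP_sf {A : Type*} [MeasurableSpace A] (μ : Measure A) [SigmaFinite μ] {F : A → ℝ}
    (hFm : Measurable F) (hF0 : ∀ r, 0 ≤ F r) :
    ∫⁻ t in Ioi (1:ℝ), (∫⁻ r, ENNReal.ofReal (max (F r - t) 0) ∂μ) / ENNReal.ofReal t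
      = ∫⁻ r, ENNReal.ofReal (pAux (F r)) ∂μ := by
  have hmeas : Measurable (Function.uncurry fun (t : ℝ) (r : A) =>
      ENNReal.ofReal (max (F r - t) 0) / ENNReal.ofReal t) := by
    apply Measurable.div
    · exact ENNReal.measurable_ofReal.comp
        (((hFm.comp measurable_snd).sub measurable_fst).max measurable_const)
    · exact ENNReal.measurable_ofReal.comp measurable_fst
  calc ∫⁻ t in Ioi (1:ℝ), (∫⁻ r, ENNReal.ofReal (max (F r - t) 0) ∂μ) / ENNReal.ofReal t
      = ∫⁻ t in Ioi (1:ℝ), ∫⁻ r, ENNReal.ofReal (max (F r - t) 0) / ENNReal.ofReal t ∂μ := by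
        refine lintegral_congr fun t => ?_
        simp only [div_eq_mul_inv]
        rw [lintegral_mul_const'' _ (f := fun r => ENNReal.ofReal (max (F r - t) 0))
          (((hFm.sub measurable_const).max measurable_const).ennreal_ofReal).aemeasurable]
    _ = ∫⁻ r, (∫⁻ t in Ioi (1:ℝ), ENNReal.ofReal (max (F r - t) 0) / ENNReal.ofReal t) ∂μ := by
        exact lintegral_lintegral_swap (μ := volume.restrict (Ioi (1:ℝ))) (ν := μ) hmeas.aemeasurable
    _ = ∫⁻ r, ENNReal.ofReal (pAux (F r)) ∂μ := by
        refine lintegral_congr fun r => ?_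
        rw [setLIntegral_congr_fun measurableSet_Ioi
          ((fun t (ht : t ∈ Ioi (1:ℝ)) =>
            (ENNReal.ofReal_div_of_pos (lt_trans one_pos ht)).symm))]
        rw [← ofReal_integral_eq_lintegral_ofReal (intP (hF0 r)) ?nn, calcP (hF0 r)]
        case nn =>
          filter_upwards [ae_restrict_mem measurableSet_Ioi] with t ht
          exact div_nonneg (le_max_right _ _) (le_trans one_pos.le (le_of_lt ht))


lemma keyQ {A : Type*} [MeasurableSpace A] (μ : Measure A) {F : A → ℝ}
    (hFm : Measurable F) (hF0 : ∀ r, 0 ≤ F r) (hFint : Integrable F μ) :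
    ∫⁻ t in Ioc (0:ℝ) 1, (∫⁻ r, ENNReal.ofReal (min (F r) t) ∂μ) / ENNReal.ofReal t
      = ∫⁻ r, ENNReal.ofReal (qAux (F r)) ∂μ := by
  obtain ⟨s, hsm, hs0, hsf⟩ := exists_sigmaFinite hFm hF0 hFint
  calc ∫⁻ t in Ioc (0:ℝ) 1, (∫⁻ r, ENNReal.ofReal (min (F r) t) ∂μ) / ENNReal.ofReal t
      = ∫⁻ t in Ioc (0:ℝ) 1,
          (∫⁻ r, ENNReal.ofReal (min (F r) t) ∂(μ.restrict s)) / ENNReal.ofReal t := by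
        refine setLIntegral_congr_fun measurableSet_Ioc (fun t ht => ?_)
        rw [lintegral_restrict_eq hsm fun r hr => by
          rw [hs0 r hr, min_eq_left ht.1.le, ENNReal.ofReal_zero]]
    _ = ∫⁻ r, ENNReal.ofReal (qAux (F r)) ∂(μ.restrict s) := keyQ_sf _ hFm hF0
    _ = ∫⁻ r, ENNReal.ofReal (qAux (F r)) ∂μ :=
        lintegral_restrict_eq hsm fun r hr => by rw [hs0 r hr, qAux_zero, ENNReal.ofReal_zero]

lemma keyP {A : Type*} [MeasurableSpace A] (μ : Measure A) {F : A → ℝ}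
    (hFm : Measurable F) (hF0 : ∀ r, 0 ≤ F r) (hFint : Integrable F μ) :
    ∫⁻ t in Ioi (1:ℝ), (∫⁻ r, ENNReal.ofReal (max (F r - t) 0) ∂μ) / ENNReal.ofReal t
      = ∫⁻ r, ENNReal.ofReal (pAux (F r)) ∂μ := by
  obtain ⟨s, hsm, hs0, hsf⟩ := exists_sigmaFinite hFm hF0 hFint
  calc ∫⁻ t in Ioi (1:ℝ), (∫⁻ r, ENNReal.ofReal (max (F r - t) 0) ∂μ) / ENNReal.ofReal t
      = ∫⁻ t in Ioi (1:ℝ),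
          (∫⁻ r, ENNReal.ofReal (max (F r - t) 0) ∂(μ.restrict s)) / ENNReal.ofReal t := by
        refine setLIntegral_congr_fun measurableSet_Ioi (fun t ht => ?_)
        simp only [mem_Ioi] at ht
        rw [lintegral_restrict_eq hsm fun r hr => by
          rw [hs0 r hr, max_eq_right (by linarith), ENNReal.ofReal_zero]]
    _ = ∫⁻ r, ENNReal.ofReal (pAux (F r)) ∂(μ.restrict s) := keyP_sf _ hFm hF0
    _ = ∫⁻ r, ENNReal.ofReal (pAux (F r)) ∂μ :=
        lintegral_restrict_eq hsm fun r hr => by rw [hs0 r hr, pAux_zero, ENNReal.ofReal_zero]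

/-- Continuous majorization `f ≻ g` implies `h(f) ≤ h(g)` for the Shannon
differential entropies `h(f) = −∫ f ln f` (assuming they exist). -/
theorem entropy_antitone_under_majorization
    {A : Type*} [MeasureSpace A] (f g : A → ℝ)
    (hf_nonneg : ∀ r, 0 ≤ f r) (hg_nonneg : ∀ r, 0 ≤ g r)
    (hf_int : Integrable f) (hg_int : Integrable g)
    (hf_prob : ∫ r, f r = 1) (hg_prob : ∫ r, g r = 1)
    (hmaj : ∀ t : ℝ, 0 ≤ t → ∫ r, max (g r - t) 0 ≤ ∫ r, max (f r - t) 0)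
    (hf_ent : Integrable (fun r => f r * Real.log (f r)))
    (hg_ent : Integrable (fun r => g r * Real.log (g r))) :
    -∫ r, f r * Real.log (f r) ≤ -∫ r, g r * Real.log (g r) := by
  classical
  set F : A → ℝ := fun r => max (hf_int.1.mk f r) 0 with hFdef
  set G : A → ℝ := fun r => max (hg_int.1.mk g r) 0 with hGdef
  have hFm : Measurable F := hf_int.1.stronglyMeasurable_mk.measurable.max measurable_const
  have hGm : Measurable G := hg_int.1.stronglyMeasurable_mk.measurable.max measurable_const
  have hfF : f =ᵐ[volume] F := by
    filter_upwards [hf_int.1.ae_eq_mk] with r h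
    rw [hFdef]; dsimp only; rw [← h, max_eq_left (hf_nonneg r)]
  have hgG : g =ᵐ[volume] G := by
    filter_upwards [hg_int.1.ae_eq_mk] with r h
    rw [hGdef]; dsimp only; rw [← h, max_eq_left (hg_nonneg r)]
  have hF0 : ∀ r, 0 ≤ F r := fun r => le_max_right _ _
  have hG0 : ∀ r, 0 ≤ G r := fun r => le_max_right _ _
  have hFint : Integrable F := hf_int.congr hfF
  have hGint : Integrable G := hg_int.congr hgG
  have hFprob : ∫ r, F r = 1 := by rw [← integral_congr_ae hfF]; exact hf_prob
  have hGprob : ∫ r, G r = 1 := by rw [← integral_congr_ae hgG]; exact hg_prob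
  have hFlog : (fun r => f r * Real.log (f r)) =ᵐ[volume] fun r => F r * Real.log (F r) := by
    filter_upwards [hfF] with r h; rw [h]
  have hGlog : (fun r => g r * Real.log (g r)) =ᵐ[volume] fun r => G r * Real.log (G r) := by
    filter_upwards [hgG] with r h; rw [h]
  have hFentI : Integrable (fun r => F r * Real.log (F r)) := hf_ent.congr hFlog
  have hGentI : Integrable (fun r => G r * Real.log (G r)) := hg_ent.congr hGlog
  have hFent_eq : ∫ r, f r * Real.log (f r) = ∫ r, F r * Real.log (F r) :=
    integral_congr_ae hFlog
  have hGent_eq : ∫ r, g r * Real.log (g r) = ∫ r, G r * Real.log (G r) :=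
    integral_congr_ae hGlog
  -- integrability of the auxiliary compositions
  have hqF : Integrable (fun r => qAux (F r)) := by
    refine Integrable.mono' (hFint.add hFentI.abs)
      ((measurable_qAux.comp hFm).aestronglyMeasurable) (ae_of_all _ fun r => ?_)
    rw [Real.norm_eq_abs, abs_of_nonneg (qAux_nonneg (hF0 r))]
    exact qAux_le (hF0 r)
  have hqG : Integrable (fun r => qAux (G r)) := by
    refine Integrable.mono' (hGint.add hGentI.abs)
      ((measurable_qAux.comp hGm).aestronglyMeasurable) (ae_of_all _ fun r => ?_)
    rw [Real.norm_eq_abs, abs_of_nonneg (qAux_nonneg (hG0 r))]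
    exact qAux_le (hG0 r)
  have hpF : Integrable (fun r => pAux (F r)) := by
    refine Integrable.mono' hFentI.abs
      ((measurable_pAux.comp hFm).aestronglyMeasurable) (ae_of_all _ fun r => ?_)
    rw [Real.norm_eq_abs, abs_of_nonneg (pAux_nonneg (hF0 r))]
    exact pAux_le (hF0 r)
  have hpG : Integrable (fun r => pAux (G r)) := by
    refine Integrable.mono' hGentI.abs
      ((measurable_pAux.comp hGm).aestronglyMeasurable) (ae_of_all _ fun r => ?_)
    rw [Real.norm_eq_abs, abs_of_nonneg (pAux_nonneg (hG0 r))]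
    exact pAux_le (hG0 r)
  -- decomposition of the entropy integrals
  have hdecF : ∫ r, F r * Real.log (F r) = 1 - (∫ r, qAux (F r)) + ∫ r, pAux (F r) := by
    have h1 : ∫ r, F r * Real.log (F r) = ∫ r, (F r - qAux (F r) + pAux (F r)) :=
      integral_congr_ae (ae_of_all _ fun r => xlogx_decomp (hF0 r))
    have hsub : Integrable (fun r => F r - qAux (F r)) volume := hFint.sub hqF
    rw [h1, integral_add hsub hpF, integral_sub hFint hqF, hFprob]
  have hdecG : ∫ r, G r * Real.log (G r) = 1 - (∫ r, qAux (G r)) + ∫ r, pAux (G r) := by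
    have h1 : ∫ r, G r * Real.log (G r) = ∫ r, (G r - qAux (G r) + pAux (G r)) :=
      integral_congr_ae (ae_of_all _ fun r => xlogx_decomp (hG0 r))
    have hsub : Integrable (fun r => G r - qAux (G r)) volume := hGint.sub hqG
    rw [h1, integral_add hsub hpG, integral_sub hGint hqG, hGprob]
  -- majorization in terms of lintegrals
  have hBle : ∀ t : ℝ, 0 ≤ t →
      (∫⁻ r, ENNReal.ofReal (max (G r - t) 0)) ≤ ∫⁻ r, ENNReal.ofReal (max (F r - t) 0) := by
    intro t ht
    have hintf : Integrable (fun r => max (f r - t) 0) := by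
      refine Integrable.mono' hf_int
        (((hf_int.aemeasurable.sub aemeasurable_const).max aemeasurable_const).aestronglyMeasurable)
        (ae_of_all _ fun r => ?_)
      rw [Real.norm_eq_abs, abs_of_nonneg (le_max_right _ _)]
      exact max_le (by linarith [hf_nonneg r]) (hf_nonneg r)
    have hintg : Integrable (fun r => max (g r - t) 0) := by
      refine Integrable.mono' hg_int
        (((hg_int.aemeasurable.sub aemeasurable_const).max aemeasurable_const).aestronglyMeasurable)
        (ae_of_all _ fun r => ?_)
      rw [Real.norm_eq_abs, abs_of_nonneg (le_max_right _ _)]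
      exact max_le (by linarith [hg_nonneg r]) (hg_nonneg r)
    have e1 : ∫⁻ r, ENNReal.ofReal (max (F r - t) 0)
        = ENNReal.ofReal (∫ r, max (f r - t) 0) := by
      have h1 := ofReal_integral_eq_lintegral_ofReal hintf
        (ae_of_all _ fun r => le_max_right (f r - t) 0)
      have h2 : (∫⁻ r, ENNReal.ofReal (max (f r - t) 0))
          = ∫⁻ r, ENNReal.ofReal (max (F r - t) 0) :=
        lintegral_congr_ae (by filter_upwards [hfF] with r h; rw [h])
      exact (h1.trans h2).symm
    have e2 : ∫⁻ r, ENNReal.ofReal (max (G r - t) 0)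
        = ENNReal.ofReal (∫ r, max (g r - t) 0) := by
      have h1 := ofReal_integral_eq_lintegral_ofReal hintg
        (ae_of_all _ fun r => le_max_right (g r - t) 0)
      have h2 : (∫⁻ r, ENNReal.ofReal (max (g r - t) 0))
          = ∫⁻ r, ENNReal.ofReal (max (G r - t) 0) :=
        lintegral_congr_ae (by filter_upwards [hgG] with r h; rw [h])
      exact (h1.trans h2).symm
    rw [e1, e2]
    exact ENNReal.ofReal_le_ofReal (hmaj t ht)
  have honeF : (∫⁻ r, ENNReal.ofReal (F r)) = 1 := by
    rw [← ofReal_integral_eq_lintegral_ofReal hFint (ae_of_all _ hF0), hFprob,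
      ENNReal.ofReal_one]
  have honeG : (∫⁻ r, ENNReal.ofReal (G r)) = 1 := by
    rw [← ofReal_integral_eq_lintegral_ofReal hGint (ae_of_all _ hG0), hGprob,
      ENNReal.ofReal_one]
  have hBtopF : ∀ t : ℝ, 0 ≤ t → (∫⁻ r, ENNReal.ofReal (max (F r - t) 0)) ≤ 1 := by
    intro t ht; rw [← honeF]
    refine lintegral_mono fun r => ENNReal.ofReal_le_ofReal ?_
    exact max_le (by linarith [hF0 r]) (hF0 r)
  have hBtopG : ∀ t : ℝ, 0 ≤ t → (∫⁻ r, ENNReal.ofReal (max (G r - t) 0)) ≤ 1 := by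
    intro t ht; rw [← honeG]
    refine lintegral_mono fun r => ENNReal.ofReal_le_ofReal ?_
    exact max_le (by linarith [hG0 r]) (hG0 r)
  have hminF : ∀ t : ℝ, 0 ≤ t → (∫⁻ r, ENNReal.ofReal (min (F r) t))
      = 1 - ∫⁻ r, ENNReal.ofReal (max (F r - t) 0) := by
    intro t ht
    refine ENNReal.eq_sub_of_add_eq
      (ne_of_lt (lt_of_le_of_lt (hBtopF t ht) ENNReal.one_lt_top)) ?_
    rw [← lintegral_add_left ((hFm.min measurable_const).ennreal_ofReal), ← honeF]
    refine lintegral_congr fun r => ?_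
    rw [← ENNReal.ofReal_add (le_min (hF0 r) ht) (le_max_right _ _)]
    congr 1
    rcases le_total (F r) t with h | h
    · rw [min_eq_left h, max_eq_right (by linarith)]; ring
    · rw [min_eq_right h, max_eq_left (by linarith)]; ring
  have hminG : ∀ t : ℝ, 0 ≤ t → (∫⁻ r, ENNReal.ofReal (min (G r) t))
      = 1 - ∫⁻ r, ENNReal.ofReal (max (G r - t) 0) := by
    intro t ht
    refine ENNReal.eq_sub_of_add_eq
      (ne_of_lt (lt_of_le_of_lt (hBtopG t ht) ENNReal.one_lt_top)) ?_
    rw [← lintegral_add_left ((hGm.min measurable_const).ennreal_ofReal), ← honeG]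
    refine lintegral_congr fun r => ?_
    rw [← ENNReal.ofReal_add (le_min (hG0 r) ht) (le_max_right _ _)]
    congr 1
    rcases le_total (G r) t with h | h
    · rw [min_eq_left h, max_eq_right (by linarith)]; ring
    · rw [min_eq_right h, max_eq_left (by linarith)]; ring
  -- the two key lintegral inequalities
  have hQ : (∫⁻ r, ENNReal.ofReal (qAux (F r))) ≤ ∫⁻ r, ENNReal.ofReal (qAux (G r)) := by
    rw [← keyQ volume hFm hF0 hFint, ← keyQ volume hGm hG0 hGint]
    refine setLIntegral_mono' measurableSet_Ioc fun t ht => ?_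
    rw [hminF t ht.1.le, hminG t ht.1.le]
    exact ENNReal.div_le_div_right (tsub_le_tsub_left (hBle t ht.1.le) 1) _
  have hP : (∫⁻ r, ENNReal.ofReal (pAux (G r))) ≤ ∫⁻ r, ENNReal.ofReal (pAux (F r)) := by
    rw [← keyP volume hFm hF0 hFint, ← keyP volume hGm hG0 hGint]
    refine setLIntegral_mono' measurableSet_Ioi fun t ht => ?_
    simp only [mem_Ioi] at ht
    exact ENNReal.div_le_div_right (hBle t (by linarith)) _
  -- back to real integrals
  have hQr : (∫ r, qAux (F r)) ≤ ∫ r, qAux (G r) := by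
    rw [← ofReal_integral_eq_lintegral_ofReal hqF (ae_of_all _ fun r => qAux_nonneg (hF0 r)),
      ← ofReal_integral_eq_lintegral_ofReal hqG (ae_of_all _ fun r => qAux_nonneg (hG0 r))]
      at hQ
    exact (ENNReal.ofReal_le_ofReal_iff
      (integral_nonneg fun r => qAux_nonneg (hG0 r))).mp hQ
  have hPr : (∫ r, pAux (G r)) ≤ ∫ r, pAux (F r) := by
    rw [← ofReal_integral_eq_lintegral_ofReal hpF (ae_of_all _ fun r => pAux_nonneg (hF0 r)),
      ← ofReal_integral_eq_lintegral_ofReal hpG (ae_of_all _ fun r => pAux_nonneg (hG0 r))]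
      at hP
    exact (ENNReal.ofReal_le_ofReal_iff
      (integral_nonneg fun r => pAux_nonneg (hF0 r))).mp hP
  rw [hFent_eq, hGent_eq, hdecF, hdecG]
  linarith
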